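/- Let p_1, …, p_n be complex polynomials and ξ_1, …, ξ_n distinct real numbers, and suppose that for some M > 0 the function f(t) = p_1(t)·exp(i·ξ_1·t) + … + p_n(t)·exp(i·ξ_n·t) satisfies |f(t)| ≤ M for all t ∈ [0, ∞). Then each polynomial p_j is constant (has degree zero or is zero). -/

import Mathlib

open Complex

noncomputable section

open Polynomial Filter Real

noncomputable def rePart (p : Polynomial ℂ) : Polynomial ℝ :=
  ∑ k ∈ Finset.range (p.natDegree + 1), Polynomial.C (p.coeff k).re * Polynomial.X ^ k

noncomputable def imPart (p : Polynomial ℂ) : Polynomial ℝ :=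
  ∑ k ∈ Finset.range (p.natDegree + 1), Polynomial.C (p.coeff k).im * Polynomial.X ^ k

lemma rePart_coeff (p : Polynomial ℂ) (m : ℕ) : (rePart p).coeff m = (p.coeff m).re := by
  rw [rePart, Polynomial.finset_sum_coeff]
  by_cases hm : m < p.natDegree + 1
  · rw [Finset.sum_eq_single m]
    · simp
    · intro b _ hb; simp [Polynomial.coeff_C_mul, Polynomial.coeff_X_pow, Ne.symm hb]
    · intro h; exact absurd (Finset.mem_range.2 hm) h
  · push_neg at hm
    rw [Finset.sum_eq_zero, Polynomial.coeff_eq_zero_of_natDegree_lt (by omega)]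
    · simp
    · intro b hb; have := Finset.mem_range.1 hb
      rw [Polynomial.coeff_C_mul, Polynomial.coeff_X_pow, if_neg (by omega : ¬ m = b), mul_zero]

lemma imPart_coeff (p : Polynomial ℂ) (m : ℕ) : (imPart p).coeff m = (p.coeff m).im := by
  rw [imPart, Polynomial.finset_sum_coeff]
  by_cases hm : m < p.natDegree + 1
  · rw [Finset.sum_eq_single m]
    · simp
    · intro b _ hb; simp [Polynomial.coeff_C_mul, Polynomial.coeff_X_pow, Ne.symm hb]
    · intro h; exact absurd (Finset.mem_range.2 hm) h
  · push_neg at hm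
    rw [Finset.sum_eq_zero, Polynomial.coeff_eq_zero_of_natDegree_lt (by omega)]
    · simp
    · intro b hb; have := Finset.mem_range.1 hb
      rw [Polynomial.coeff_C_mul, Polynomial.coeff_X_pow, if_neg (by omega : ¬ m = b), mul_zero]

lemma eval_re_im (p : Polynomial ℂ) (t : ℝ) :
    p.eval (t : ℂ) = Complex.ofReal ((rePart p).eval t) + Complex.ofReal ((imPart p).eval t) * I := by
  have hL : p.eval (t : ℂ) = ∑ k ∈ Finset.range (p.natDegree + 1), p.coeff k * (t : ℂ) ^ k :=
    Polynomial.eval_eq_sum_range _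
  have hR : (rePart p).eval t = ∑ k ∈ Finset.range (p.natDegree + 1), (p.coeff k).re * t ^ k := by
    simp [rePart, Polynomial.eval_finset_sum]
  have hI : (imPart p).eval t = ∑ k ∈ Finset.range (p.natDegree + 1), (p.coeff k).im * t ^ k := by
    simp [imPart, Polynomial.eval_finset_sum]
  rw [hL, hR, hI]
  push_cast
  rw [Finset.sum_mul, ← Finset.sum_add_distrib]
  apply Finset.sum_congr rfl
  intro k _
  conv_lhs => rw [← Complex.re_add_im (p.coeff k)]
  ring

/-- A complex polynomial bounded on `[0, ∞)` is constant. -/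
lemma poly_bounded_const (p : Polynomial ℂ) (C : ℝ)
    (h : ∀ t : ℝ, 0 ≤ t → ‖p.eval (t : ℂ)‖ ≤ C) : ∃ a : ℂ, p = Polynomial.C a := by
  have hre : (rePart p).degree ≤ 0 := by
    rw [← Polynomial.abs_isBoundedUnder_iff]
    refine ⟨C, ?_⟩
    rw [Filter.eventually_map]
    filter_upwards [Filter.eventually_ge_atTop (0 : ℝ)] with t ht
    have h1 : ((rePart p).eval t) = (p.eval (t : ℂ)).re := by
      rw [eval_re_im p t]; simp
    rw [h1]
    exact le_trans (Complex.abs_re_le_norm _) (h t ht)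
  have him : (imPart p).degree ≤ 0 := by
    rw [← Polynomial.abs_isBoundedUnder_iff]
    refine ⟨C, ?_⟩
    rw [Filter.eventually_map]
    filter_upwards [Filter.eventually_ge_atTop (0 : ℝ)] with t ht
    have h1 : ((imPart p).eval t) = (p.eval (t : ℂ)).im := by
      rw [eval_re_im p t]; simp
    rw [h1]
    exact le_trans (Complex.abs_im_le_norm _) (h t ht)
  have hcoeff : ∀ m, 1 ≤ m → p.coeff m = 0 := by
    intro m hm
    have h1 : (rePart p).coeff m = 0 :=
      Polynomial.coeff_eq_zero_of_degree_lt (lt_of_le_of_lt hre (by exact_mod_cast Nat.cast_pos.2 hm))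
    have h2 : (imPart p).coeff m = 0 :=
      Polynomial.coeff_eq_zero_of_degree_lt (lt_of_le_of_lt him (by exact_mod_cast Nat.cast_pos.2 hm))
    rw [rePart_coeff] at h1; rw [imPart_coeff] at h2
    exact Complex.ext h1 h2
  have hdeg : p.natDegree = 0 := by
    by_contra hd
    have h0 : p ≠ 0 := fun h0 => hd (by simp [h0])
    exact (Polynomial.leadingCoeff_ne_zero.2 h0) (hcoeff _ (by omega))
  exact ⟨p.coeff 0, Polynomial.eq_C_of_natDegree_eq_zero hdeg⟩


lemma taylor_coeff_natDegree' (p : Polynomial ℂ) (r : ℂ) :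
    (Polynomial.taylor r p).coeff p.natDegree = p.leadingCoeff := by
  have h1 : (Polynomial.taylor r p).natDegree = p.natDegree := Polynomial.natDegree_taylor p r
  by_cases hd : p.natDegree = 0
  · obtain ⟨a, ha⟩ := Polynomial.natDegree_eq_zero.1 hd
    subst ha
    simp [hd, Polynomial.taylor_C]
  · have hlc : (Polynomial.taylor r p).leadingCoeff = p.leadingCoeff := by
      rw [Polynomial.taylor_apply, Polynomial.leadingCoeff_comp (by simp), ]
      simp [Polynomial.leadingCoeff_X_add_C]
    rw [← hlc, Polynomial.leadingCoeff, h1]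

lemma main_ind (s : ℕ) : ∀ (n : ℕ) (p : Fin n → Polynomial ℂ) (ξ : Fin n → ℝ),
    Function.Injective ξ → (∑ j, (p j).natDegree) ≤ s → ∀ (M : ℝ),
    (∀ t : ℝ, 0 ≤ t →
      ‖∑ j, (p j).eval (t : ℂ) * Complex.exp (Complex.I * (ξ j : ℂ) * (t : ℂ))‖ ≤ M) →
    ∀ j, ∃ a : ℂ, p j = Polynomial.C a := by
  induction s with
  | zero =>
    intro n p ξ hξ hs M hbd j
    have : (p j).natDegree = 0 := by
      have h2 : (p j).natDegree ≤ ∑ k, (p k).natDegree :=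
        Finset.single_le_sum (f := fun k => (p k).natDegree) (fun k _ => Nat.zero_le _)
          (Finset.mem_univ j)
      omega
    exact ⟨(p j).coeff 0, Polynomial.eq_C_of_natDegree_eq_zero this⟩
  | succ s ih =>
    intro n p ξ hξ hs M hbd
    by_cases hall : ∀ k, (p k).natDegree = 0
    · exact fun j => ⟨(p j).coeff 0, Polynomial.eq_C_of_natDegree_eq_zero (hall j)⟩
    push_neg at hall
    obtain ⟨j, hj⟩ := hall
    have hdj : 1 ≤ (p j).natDegree := Nat.one_le_iff_ne_zero.2 hj
    -- choose h
    obtain ⟨B, hB⟩ : ∃ B : ℝ, ∀ k, |ξ k - ξ j| ≤ B := Finite.exists_le _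
    set h : ℝ := Real.pi / (|B| + 1) with hh
    have hpos : 0 < h := div_pos Real.pi_pos (by positivity)
    have hlt : ∀ k, |(ξ k - ξ j) * h| < Real.pi := by
      intro k
      rw [abs_mul, abs_of_pos hpos]
      have h1 : |ξ k - ξ j| ≤ |B| := le_trans (hB k) (le_abs_self B)
      calc |ξ k - ξ j| * h ≤ |B| * (Real.pi / (|B| + 1)) := by
            apply mul_le_mul h1 le_rfl hpos.le (abs_nonneg _)
        _ < Real.pi := by
            rw [div_eq_inv_mul, ← mul_assoc]
            have : |B| * (|B| + 1)⁻¹ < 1 := by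
              rw [mul_inv_lt_iff₀ (by positivity)]; linarith [abs_nonneg B]
            nlinarith [Real.pi_pos]
    have hexp_ne : ∀ k, k ≠ j → Complex.exp (Complex.I * ((ξ k : ℂ) - (ξ j : ℂ)) * (h : ℂ)) ≠ 1 := by
      intro k hk hcon
      rw [Complex.exp_eq_one_iff] at hcon
      obtain ⟨m, hm⟩ := hcon
      have hre : (ξ k - ξ j) * h = m * (2 * Real.pi) := by
        have : (((ξ k - ξ j) * h : ℝ) : ℂ) * Complex.I = ((m : ℝ) * (2 * Real.pi) : ℝ) * Complex.I := by
          push_cast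
          linear_combination hm
        have := mul_right_cancel₀ Complex.I_ne_zero this
        exact_mod_cast this
      have hne : (ξ k - ξ j) * h ≠ 0 :=
        mul_ne_zero (sub_ne_zero.2 fun hcc => hk (hξ hcc)) hpos.ne'
      have hm0 : m ≠ 0 := by rintro rfl; rw [Int.cast_zero, zero_mul] at hre; exact hne hre
      have : (2 : ℝ) * Real.pi ≤ |(ξ k - ξ j) * h| := by
        rw [hre, abs_mul, abs_of_pos (by positivity : (0:ℝ) < 2 * Real.pi)]
        have : (1 : ℝ) ≤ |(m : ℝ)| := by
          rw [← Int.cast_abs]; exact_mod_cast Int.one_le_abs hm0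
        nlinarith [Real.pi_pos]
      linarith [hlt k, Real.pi_pos]
    -- the new family
    set e : Fin n → ℂ := fun k => Complex.exp (Complex.I * (ξ k : ℂ) * (h : ℂ)) with he
    set q : Fin n → Polynomial ℂ := fun k =>
      Polynomial.taylor (h : ℂ) (p k) * Polynomial.C (e k) - p k * Polynomial.C (e j) with hq
    have habs_e : ∀ k, ‖e k‖ = 1 := by
      intro k; simp [he, Complex.norm_exp]
    have hek_ne : ∀ k, k ≠ j → e k ≠ e j := by
      intro k hk hcon
      apply hexp_ne k hk
      have h2 : Complex.exp (Complex.I * (ξ k : ℂ) * (h : ℂ) - Complex.I * (ξ j : ℂ) * (h : ℂ)) = 1 := by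
        rw [Complex.exp_sub]
        show e k / e j = 1
        rw [hcon, div_self (Complex.exp_ne_zero _)]
      rw [← h2]
      congr 1
      ring
    -- bound for new family
    have hbd' : ∀ t : ℝ, 0 ≤ t →
        ‖∑ k, (q k).eval (t : ℂ) * Complex.exp (Complex.I * (ξ k : ℂ) * (t : ℂ))‖
          ≤ M + M := by
      intro t ht
      have key : (∑ k, (q k).eval (t : ℂ) * Complex.exp (Complex.I * (ξ k : ℂ) * (t : ℂ)))
          = (∑ k, (p k).eval ((t + h : ℝ) : ℂ) * Complex.exp (Complex.I * (ξ k : ℂ) * ((t + h : ℝ) : ℂ)))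
            - e j * (∑ k, (p k).eval (t : ℂ) * Complex.exp (Complex.I * (ξ k : ℂ) * (t : ℂ))) := by
        rw [Finset.mul_sum, ← Finset.sum_sub_distrib]
        apply Finset.sum_congr rfl
        intro k _
        simp only [hq, Polynomial.eval_sub, Polynomial.eval_mul, Polynomial.eval_C]
        rw [Polynomial.taylor_eval]
        push_cast
        rw [show Complex.I * (ξ k : ℂ) * ((t : ℂ) + (h : ℂ))
            = Complex.I * (ξ k : ℂ) * (t : ℂ) + Complex.I * (ξ k : ℂ) * (h : ℂ) by ring]
        rw [Complex.exp_add]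
        simp only [he]
        ring
      rw [key]
      calc ‖_‖ ≤ ‖∑ k, (p k).eval ((t + h : ℝ) : ℂ) *
              Complex.exp (Complex.I * (ξ k : ℂ) * ((t + h : ℝ) : ℂ))‖
            + ‖e j * (∑ k, (p k).eval (t : ℂ) * Complex.exp (Complex.I * (ξ k : ℂ) * (t : ℂ)))‖ :=
          norm_sub_le _ _
        _ ≤ M + M := by
          rw [norm_mul, habs_e j, one_mul]
          exact add_le_add (hbd (t + h) (by linarith)) (hbd t ht)
    -- degree bounds
    have hq_le : ∀ k, (q k).natDegree ≤ (p k).natDegree := by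
      intro k
      apply le_trans (Polynomial.natDegree_sub_le _ _)
      simp only [max_le_iff]
      constructor
      · apply le_trans (Polynomial.natDegree_mul_le)
        simp [Polynomial.natDegree_taylor]
      · apply le_trans (Polynomial.natDegree_mul_le)
        simp
    have hqj_lt : (q j).natDegree < (p j).natDegree := by
      have hcoeff : (q j).coeff ((p j).natDegree) = 0 := by
        simp only [hq, Polynomial.coeff_sub, Polynomial.coeff_mul_C]
        rw [taylor_coeff_natDegree', Polynomial.leadingCoeff]
        ring
      rcases lt_or_eq_of_le (hq_le j) with h1 | h1
      · exact h1
      · exfalso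
        have hqj0 : q j ≠ 0 := by
          intro h0
          rw [h0] at h1
          simp at h1
          omega
        have := Polynomial.leadingCoeff_ne_zero.2 hqj0
        rw [Polynomial.leadingCoeff, h1] at this
        exact this hcoeff
    have hsum : (∑ k, (q k).natDegree) ≤ s := by
      have : (∑ k, (q k).natDegree) < ∑ k, (p k).natDegree := by
        apply Finset.sum_lt_sum (fun k _ => hq_le k) ⟨j, Finset.mem_univ j, hqj_lt⟩
      omega
    have hqconst := ih n q ξ hξ hsum (M + M) hbd'
    -- other polynomials are constant
    have hconst : ∀ k, k ≠ j → (p k).natDegree = 0 := by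
      intro k hk
      by_contra hd
      have hdk : 1 ≤ (p k).natDegree := Nat.one_le_iff_ne_zero.2 hd
      obtain ⟨a, ha⟩ := hqconst k
      have hc : (q k).coeff ((p k).natDegree) = 0 := by
        rw [ha, Polynomial.coeff_C, if_neg hd]
      rw [hq] at hc
      simp only [Polynomial.coeff_sub, Polynomial.coeff_mul_C] at hc
      rw [taylor_coeff_natDegree', Polynomial.leadingCoeff, ← mul_sub] at hc
      rcases mul_eq_zero.1 hc with h0 | h0
      · have hne : p k ≠ 0 := fun h0' => hd (by simp [h0'])
        exact Polynomial.leadingCoeff_ne_zero.2 hne (by rwa [Polynomial.leadingCoeff])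
      · exact hek_ne k hk (sub_eq_zero.1 h0)
    -- p j is bounded, hence constant
    have hpj : ∃ a, p j = Polynomial.C a := by
      apply poly_bounded_const (p j) (M + ∑ k ∈ Finset.univ.erase j, ‖(p k).coeff 0‖)
      intro t ht
      have hsplit : (p j).eval (t : ℂ) * Complex.exp (Complex.I * (ξ j : ℂ) * (t : ℂ))
          = (∑ k, (p k).eval (t : ℂ) * Complex.exp (Complex.I * (ξ k : ℂ) * (t : ℂ)))
            - ∑ k ∈ Finset.univ.erase j, (p k).eval (t : ℂ) * Complex.exp (Complex.I * (ξ k : ℂ) * (t : ℂ)) := by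
        rw [← Finset.add_sum_erase _ _ (Finset.mem_univ j)]
        ring
      have habs1 : ‖(p j).eval (t : ℂ)‖ =
          ‖(p j).eval (t : ℂ) * Complex.exp (Complex.I * (ξ j : ℂ) * (t : ℂ))‖ := by
        rw [norm_mul]
        have : ‖Complex.exp (Complex.I * (ξ j : ℂ) * (t : ℂ))‖ = 1 := by
          simp [Complex.norm_exp]
        rw [this, mul_one]
      rw [habs1, hsplit]
      apply le_trans (norm_sub_le _ _)
      apply add_le_add (hbd t ht)
      apply le_trans (norm_sum_le _ _)
      apply Finset.sum_le_sum
      intro k hk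
      have hk' : k ≠ j := Finset.ne_of_mem_erase hk
      rw [norm_mul]
      have : ‖Complex.exp (Complex.I * (ξ k : ℂ) * (t : ℂ))‖ = 1 := by
        simp [Complex.norm_exp]
      rw [this, mul_one]
      conv_lhs => rw [Polynomial.eq_C_of_natDegree_eq_zero (hconst k hk')]
      simp
    intro k
    by_cases hk : k = j
    · subst hk; exact hpj
    · exact ⟨(p k).coeff 0, Polynomial.eq_C_of_natDegree_eq_zero (hconst k hk)⟩

/-- If `f(t) = p₁(t) e^{i ξ₁ t} + … + p_n(t) e^{i ξ_n t}`, with `pⱼ ∈ ℂ[X]` and distinct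
real `ξⱼ`, is bounded on `[0, ∞)`, then each `pⱼ` is constant. -/
theorem bounded_on_halfline_implies_constant (n : ℕ)
    (p : Fin n → Polynomial ℂ) (ξ : Fin n → ℝ) (hξ : Function.Injective ξ)
    (M : ℝ) (hM : 0 < M)
    (hbd : ∀ t : ℝ, 0 ≤ t →
      ‖∑ j, (p j).eval (t : ℂ) * Complex.exp (Complex.I * (ξ j : ℂ) * (t : ℂ))‖ ≤ M) :
    ∀ j, ∃ a : ℂ, p j = Polynomial.C a :=
  main_ind (∑ j, (p j).natDegree) n p ξ hξ le_rfl M hbd
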